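/- Let R be a reduced indecomposable commutative ring with unit (i.e., R has no non-zero nilpotents and its only idempotents are 0 and 1) and let G be a group such that for every field k the group algebra kG has only trivial units. Then the group algebra RG has only trivial units, i.e., every unit of RG is of the form r·g with r a unit of R and g ∈ G. -/

import Mathlib

open MonoidAlgebra

/-- Auxiliary: mapping coefficients of a monoid algebra along a ring hom. -/
noncomputable def coeffMapRH {R S : Type} [Semiring R] [Semiring S] {G : Type} [Monoid G]
    (φ : R →+* S) : MonoidAlgebra R G →+* MonoidAlgebra S G :=
  MonoidAlgebra.liftNCRingHom (MonoidAlgebra.singleOneRingHom.comp φ) (MonoidAlgebra.of S G)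
    (fun x y => by
      show MonoidAlgebra.single (1 : G) (φ x) * MonoidAlgebra.single y 1
          = MonoidAlgebra.single y 1 * MonoidAlgebra.single (1 : G) (φ x)
      simp [MonoidAlgebra.single_mul_single])

lemma coeffMapRH_apply {R S : Type} [Semiring R] [Semiring S] {G : Type} [Monoid G]
    (φ : R →+* S) (f : MonoidAlgebra R G) (x : G) :
    (coeffMapRH φ f).coeff x = φ (f.coeff x) := by
  induction f using MonoidAlgebra.induction_linear with
  | zero => simp
  | add f g hf hg =>
      rw [map_add]
      show ((coeffMapRH φ) f).coeff x + ((coeffMapRH φ) g).coeff x = _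
      rw [hf, hg, ← map_add, MonoidAlgebra.coeff_add, Finsupp.add_apply]
  | single a b =>
      have : (coeffMapRH φ) (MonoidAlgebra.single a b)
          = MonoidAlgebra.single a (φ b) := by
        simp [coeffMapRH, MonoidAlgebra.liftNCRingHom, MonoidAlgebra.single_mul_single]
      rw [this]
      classical
      simp [MonoidAlgebra.coeff_single, Finsupp.single_apply, apply_ite φ]

theorem stmt2 {R : Type} [CommRing R] [IsReduced R]
    (hR : ∀ e : R, e * e = e → e = 0 ∨ e = 1)
    {G : Type} [Group G]
    (hG : ∀ (k : Type) [Field k], ∀ u : (MonoidAlgebra k G)ˣ,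
      ∃ (r : kˣ) (g : G), (u : MonoidAlgebra k G) = MonoidAlgebra.single g (r : k)) :
    ∀ u : (MonoidAlgebra R G)ˣ, ∃ (r : Rˣ) (g : G),
      (u : MonoidAlgebra R G) = MonoidAlgebra.single g (r : R) := by
  classical
  intro u
  rcases subsingleton_or_nontrivial R with hs | hnt
  · exact ⟨1, 1, Subsingleton.elim _ _⟩
  -- Key: distinct coefficients of a unit multiply to zero.
  have key : ∀ w : (MonoidAlgebra R G)ˣ, ∀ g h : G, g ≠ h →
      (w : MonoidAlgebra R G).coeff g * (w : MonoidAlgebra R G).coeff h = 0 := by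
    intro w g h hgh
    have hnil : IsNilpotent ((w : MonoidAlgebra R G).coeff g * (w : MonoidAlgebra R G).coeff h) := by
      rw [nilpotent_iff_mem_prime]
      intro p hp
      haveI := hp
      let k := FractionRing (R ⧸ p)
      let φ : R →+* k := (algebraMap (R ⧸ p) k).comp (Ideal.Quotient.mk p)
      have hker : ∀ x : R, φ x = 0 ↔ x ∈ p := by
        intro x
        simp only [φ, RingHom.comp_apply]
        rw [IsFractionRing.to_map_eq_zero_iff, Ideal.Quotient.eq_zero_iff_mem]
      let U : (MonoidAlgebra k G)ˣ := Units.map (coeffMapRH (G := G) φ).toMonoidHom w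
      obtain ⟨r, g', hr⟩ := hG k U
      have hcoeff : ∀ x : G, x ≠ g' → φ ((w : MonoidAlgebra R G).coeff x) = 0 := by
        intro x hx
        have h1 : (U : MonoidAlgebra k G).coeff x = (MonoidAlgebra.single g' (r : k)).coeff x := by
          rw [hr]
        have h2 : (U : MonoidAlgebra k G).coeff x = φ ((w : MonoidAlgebra R G).coeff x) := by
          simp only [U, Units.coe_map, RingHom.toMonoidHom_eq_coe, MonoidHom.coe_coe]
          exact coeffMapRH_apply φ _ x
        rw [h2, MonoidAlgebra.coeff_single, Finsupp.single_apply, if_neg (fun hgx => hx hgx.symm)] at h1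
        exact h1
      have hor : g ≠ g' ∨ h ≠ g' := by
        by_contra hc
        push_neg at hc
        exact hgh (hc.1.trans hc.2.symm)
      rw [← hker, map_mul]
      rcases hor with h1 | h1
      · rw [hcoeff g h1, zero_mul]
      · rw [hcoeff h h1, mul_zero]
    exact hnil.eq_zero
  -- Now analyze u.
  set U : MonoidAlgebra R G := (u : MonoidAlgebra R G) with hU
  set V : MonoidAlgebra R G := ((u⁻¹ : (MonoidAlgebra R G)ˣ) : MonoidAlgebra R G) with hV
  have huv : U * V = 1 := u.mul_inv
  have hsum : ∑ a ∈ V.coeff.support, U.coeff a⁻¹ * V.coeff a = 1 := by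
    have h1 : (U * V).coeff 1 = 1 := by
      rw [huv, MonoidAlgebra.one_def, MonoidAlgebra.coeff_single, Finsupp.single_apply, if_pos rfl]
    rw [MonoidAlgebra.coeff_mul_apply_right] at h1
    rw [← h1, Finsupp.sum]
    apply Finset.sum_congr rfl
    intro a _
    rw [one_mul]
  set c : G → R := fun a => U.coeff a⁻¹ * V.coeff a with hc
  have horth : ∀ a b : G, a ≠ b → c a * c b = 0 := by
    intro a b hab
    have h1 : U.coeff a⁻¹ * U.coeff b⁻¹ = 0 := key u _ _ (fun hinv => hab (inv_injective hinv))
    calc c a * c b = (U.coeff a⁻¹ * U.coeff b⁻¹) * (V.coeff a * V.coeff b) := by ring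
    _ = 0 := by rw [h1, zero_mul]
  have hid : ∀ a ∈ V.coeff.support, c a * c a = c a := by
    intro a ha
    have : c a * (∑ b ∈ V.coeff.support, c b) = c a * c a := by
      rw [Finset.mul_sum]
      rw [Finset.sum_eq_single_of_mem a ha]
      intro b hb hba
      exact horth a b (fun h => hba h.symm)
    rw [hsum, mul_one] at this
    exact this.symm
  have hex : ∃ a ∈ V.coeff.support, c a = 1 := by
    by_contra hc1
    push_neg at hc1
    have : ∀ a ∈ V.coeff.support, c a = 0 := by
      intro a ha
      rcases hR (c a) (hid a ha) with h | h
      · exact h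
      · exact absurd h (hc1 a ha)
    rw [Finset.sum_congr rfl this, Finset.sum_const_zero] at hsum
    exact zero_ne_one hsum
  obtain ⟨a₀, _, ha₀⟩ := hex
  have hunit : U.coeff a₀⁻¹ * V.coeff a₀ = 1 := ha₀
  refine ⟨Units.mkOfMulEqOne (U.coeff a₀⁻¹) (V.coeff a₀) hunit, a₀⁻¹, ?_⟩
  ext x
  rw [MonoidAlgebra.coeff_single, Finsupp.single_apply]
  by_cases hx : a₀⁻¹ = x
  · rw [if_pos hx, ← hx]
    rfl
  · rw [if_neg hx]
    have h1 : U.coeff x * U.coeff a₀⁻¹ = 0 := key u _ _ (fun h => hx h.symm)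
    have : U.coeff x = U.coeff x * (U.coeff a₀⁻¹ * V.coeff a₀) := by rw [hunit, mul_one]
    rw [← mul_assoc, h1, zero_mul] at this
    exact this
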